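/- For a random variable S taking values in {0,1,...,n} and any k ∈ {1,...,n}, the tail probability P(S ≥ k) equals ∑_{i=k}^{n} (-1)^{i-k} C(i-1,k-1) · μ̃_i / i!, where μ̃_i is the i-th factorial moment of S. -/

import Mathlib

open Finset

lemma lemA (r j : ℕ) (h : r ≤ j) :
    ∑ m ∈ Finset.Icc r j, (-1:ℝ)^(m-r) * (j.choose m) * (m.choose r)
      = if j = r then 1 else 0 := by
  rw [← Finset.Ico_add_one_right_eq_Icc, Finset.sum_Ico_eq_sum_range]
  have key : ∀ t ∈ Finset.range (j + 1 - r), (-1:ℝ)^(r+t-r) * (j.choose (r+t)) * ((r+t).choose r)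
      = (j.choose r : ℝ) * ((-1:ℝ)^t * ((j-r).choose t)) := by
    intro t ht
    rw [Finset.mem_range] at ht
    have htj : r + t ≤ j := by omega
    have h1 := Nat.choose_mul (n := j) (Nat.le_add_right r t)
    rw [Nat.add_sub_cancel_left] at h1
    have h2 : (j.choose (r+t) : ℝ) * ((r+t).choose r) = (j.choose r : ℝ) * ((j-r).choose t) := by
      exact_mod_cast congrArg (Nat.cast : ℕ → ℝ) h1
    rw [Nat.add_sub_cancel_left, mul_assoc, h2]; ring
  rw [Finset.sum_congr rfl key, ← Finset.mul_sum]
  have hr : j + 1 - r = (j - r) + 1 := by omega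
  rw [hr]
  have hcast : ∑ t ∈ Finset.range (j - r + 1), (-1:ℝ)^t * ((j-r).choose t)
      = if j - r = 0 then 1 else 0 := by
    exact_mod_cast congrArg (Int.cast : ℤ → ℝ)
      (Int.alternating_sum_range_choose (n := j - r))
  rw [hcast]
  by_cases hjr : j = r
  · simp [hjr]
  · have : j - r ≠ 0 := by omega
    simp [hjr, this]

lemma lemB (k : ℕ) (hk : 1 ≤ k) : ∀ j, k ≤ j →
    ∑ i ∈ Finset.Icc k j, (-1:ℝ)^(i-k) * ((i-1).choose (k-1)) * (j.choose i) = 1 := by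
  intro j hj
  induction j, hj using Nat.le_induction with
  | base => simp
  | succ j hj ih =>
    have hsplit : ∀ i ∈ Finset.Icc k (j+1),
        (-1:ℝ)^(i-k) * ((i-1).choose (k-1)) * ((j+1).choose i)
        = (-1:ℝ)^(i-k) * ((i-1).choose (k-1)) * (j.choose i)
          + (-1:ℝ)^(i-k) * ((i-1).choose (k-1)) * (j.choose (i-1)) := by
      intro i hi
      rw [Finset.mem_Icc] at hi
      have hi1 : i - 1 + 1 = i := by omega
      rw [← hi1, Nat.choose_succ_succ]
      push_cast; ring
    rw [Finset.sum_congr rfl hsplit, Finset.sum_add_distrib]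
    have h1 : ∑ i ∈ Finset.Icc k (j+1), (-1:ℝ)^(i-k) * ((i-1).choose (k-1)) * (j.choose i)
        = ∑ i ∈ Finset.Icc k j, (-1:ℝ)^(i-k) * ((i-1).choose (k-1)) * (j.choose i) := by
      rw [← Finset.Ico_add_one_right_eq_Icc, ← Finset.Ico_add_one_right_eq_Icc, Finset.sum_Ico_succ_top (by omega)]
      simp [Nat.choose_succ_self]
    have h2 : ∑ i ∈ Finset.Icc k (j+1), (-1:ℝ)^(i-k) * ((i-1).choose (k-1)) * (j.choose (i-1))
        = ∑ m ∈ Finset.Icc (k-1) j, (-1:ℝ)^(m-(k-1)) * (m.choose (k-1)) * (j.choose m) := by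
      rw [← Finset.Ico_add_one_right_eq_Icc, ← Finset.Ico_add_one_right_eq_Icc, Finset.sum_Ico_eq_sum_range,
        Finset.sum_Ico_eq_sum_range]
      have hn : j + 1 + 1 - k = j + 1 - (k - 1) := by omega
      rw [hn]
      apply Finset.sum_congr rfl
      intro t _
      have e1 : k + t - k = t := by omega
      have e2 : k + t - 1 = k - 1 + t := by omega
      have e3 : k - 1 + t - (k - 1) = t := by omega
      rw [e1, e2, e3]
    rw [h1, h2, ih]
    have hA := lemA (k-1) j (by omega)
    rw [show ∑ m ∈ Finset.Icc (k-1) j, (-1:ℝ)^(m-(k-1)) * (m.choose (k-1)) * (j.choose m)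
        = ∑ m ∈ Finset.Icc (k-1) j, (-1:ℝ)^(m-(k-1)) * (j.choose m) * (m.choose (k-1)) by
      apply Finset.sum_congr rfl; intro m _; ring, hA]
    have hne : j ≠ k - 1 := by omega
    simp [hne]

theorem stmt1 (n k : ℕ) (hk1 : 1 ≤ k) (hkn : k ≤ n) (p : ℕ → ℝ)
    (hp : ∀ j, 0 ≤ p j) (hsum : ∑ j ∈ Finset.range (n + 1), p j = 1) :
    ∑ j ∈ Finset.Icc k n, p j =
      ∑ i ∈ Finset.Icc k n, (-1 : ℝ) ^ (i - k) * (Nat.choose (i - 1) (k - 1) : ℝ) *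
        ((∑ j ∈ Finset.range (n + 1), p j * (Nat.descFactorial j i : ℝ)) / (Nat.factorial i : ℝ)) := by
  have hrw : ∀ i ∈ Finset.Icc k n,
      (-1 : ℝ) ^ (i - k) * (Nat.choose (i - 1) (k - 1) : ℝ) *
        ((∑ j ∈ Finset.range (n + 1), p j * (Nat.descFactorial j i : ℝ)) / (Nat.factorial i : ℝ))
      = ∑ j ∈ Finset.range (n+1), p j * ((-1:ℝ)^(i-k) * ((i-1).choose (k-1)) * (j.choose i)) := by
    intro i _
    rw [div_eq_mul_inv, Finset.sum_mul, Finset.mul_sum]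
    apply Finset.sum_congr rfl
    intro j _
    have hfac : (Nat.factorial i : ℝ) ≠ 0 := by positivity
    have hd : (Nat.descFactorial j i : ℝ) = (j.choose i : ℝ) * (Nat.factorial i : ℝ) := by
      rw [Nat.descFactorial_eq_factorial_mul_choose]; push_cast; ring
    rw [hd]
    field_simp
  rw [Finset.sum_congr rfl hrw, Finset.sum_comm]
  have hinner : ∀ j ∈ Finset.range (n+1),
      ∑ i ∈ Finset.Icc k n, p j * ((-1:ℝ)^(i-k) * ((i-1).choose (k-1)) * (j.choose i))
      = if k ≤ j then p j else 0 := by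
    intro j hj
    rw [Finset.mem_range] at hj
    rw [← Finset.mul_sum]
    by_cases hkj : k ≤ j
    · have hs : ∑ i ∈ Finset.Icc k n, (-1:ℝ)^(i-k) * ((i-1).choose (k-1)) * (j.choose i)
          = ∑ i ∈ Finset.Icc k j, (-1:ℝ)^(i-k) * ((i-1).choose (k-1)) * (j.choose i) := by
        rw [← Finset.sum_subset (Finset.Icc_subset_Icc_right (by omega) : Finset.Icc k j ⊆ Finset.Icc k n)]
        intro i hi hni
        rw [Finset.mem_Icc] at *
        have : j < i := by omega
        simp [Nat.choose_eq_zero_of_lt this]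
      rw [hs, lemB k hk1 j hkj, mul_one, if_pos hkj]
    · rw [if_neg hkj]
      have hz : ∑ i ∈ Finset.Icc k n, (-1:ℝ)^(i-k) * ((i-1).choose (k-1)) * (j.choose i) = 0 := by
        apply Finset.sum_eq_zero
        intro i hi
        rw [Finset.mem_Icc] at hi
        have : j < i := by omega
        simp [Nat.choose_eq_zero_of_lt this]
      rw [hz, mul_zero]
  rw [Finset.sum_congr rfl hinner, Finset.sum_ite, Finset.sum_const_zero, add_zero]
  apply Finset.sum_congr _ (fun _ _ => rfl)
  ext x
  simp only [Finset.mem_Icc, Finset.mem_filter, Finset.mem_range]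
  omega
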